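/- For the generalized arithmetic progression a, ha+d, ha+2d, …, ha+sd with gcd(a,d) = 1, a ≥ 2, d, h ≥ 1 and 1 ≤ s < a, and every integer m ≥ 1, the Sylvester sum satisfies m·S_{m−1} = a^{m−1}·∑_{n=0}^{a−1} B_m(h·⌈n/s⌉ + nd/a) − B_m, where B_m(x) is the m-th Bernoulli polynomial, B_m = B_m(0), and ⌈·⌉ is the ceiling function. -/

import Mathlib

section SylvesterAux

open Polynomial Finset

/-- The "defect" polynomial in the Bernoulli multiplication theorem. -/
noncomputable def bmultP (a m : ℕ) : Polynomial ℚ :=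
  Polynomial.C ((a : ℚ) ^ (m - 1)) *
    ∑ k ∈ Finset.range a,
      (Polynomial.bernoulli m).comp ((Polynomial.X + Polynomial.C (k : ℚ)) * Polynomial.C ((a : ℚ)⁻¹))
  - Polynomial.bernoulli m

lemma bmultP_eval (a m : ℕ) (x : ℚ) :
    (bmultP a m).eval x =
      (a : ℚ) ^ (m - 1) * ∑ k ∈ Finset.range a, (Polynomial.bernoulli m).eval ((x + k) / a)
        - (Polynomial.bernoulli m).eval x := by
  simp [bmultP, eval_finset_sum, div_eq_mul_inv]

lemma bmultP_eval_add_one (a m : ℕ) (ha : 0 < a) (hm : 1 ≤ m) (x : ℚ) :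
    (bmultP a m).eval (x + 1) = (bmultP a m).eval x := by
  have ha0 : (a : ℚ) ≠ 0 := by positivity
  rw [bmultP_eval, bmultP_eval]
  set B := Polynomial.bernoulli m with hB
  set F : ℕ → ℚ := fun k => B.eval ((x + k) / a) with hF
  have hshift : ∑ k ∈ Finset.range a, B.eval ((x + 1 + k) / a)
      = (∑ k ∈ Finset.range a, F k + F a) - F 0 := by
    have h2 : ∑ k ∈ Finset.range a, B.eval ((x + 1 + k) / a)
        = ∑ k ∈ Finset.range a, F (k + 1) := by
      refine Finset.sum_congr rfl fun k _ => ?_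
      simp only [hF]
      norm_num
      ring_nf
    rw [h2]
    have h3 := Finset.sum_range_succ' F a
    rw [Finset.sum_range_succ] at h3
    linarith [h3]
  rw [hshift]
  have hFa : F a = F 0 + m * (x / a) ^ (m - 1) := by
    have : (x + (a : ℚ)) / a = 1 + x / a := by field_simp; ring
    simp only [hF, this, Nat.cast_zero, add_zero]
    exact Polynomial.bernoulli_eval_one_add m (x / a)
  have hBx : B.eval (x + 1) = B.eval x + m * x ^ (m - 1) := by
    rw [add_comm x 1]; exact Polynomial.bernoulli_eval_one_add m x
  have hpows : (a : ℚ) ^ (m - 1) * (x / a) ^ (m - 1) = x ^ (m - 1) := by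
    rw [div_pow, mul_div_cancel₀]
    positivity
  rw [hFa, hBx]
  have : (a : ℚ) ^ (m - 1) * (∑ k ∈ Finset.range a, F k + (F 0 + ↑m * (x / ↑a) ^ (m - 1)) - F 0)
      = (a : ℚ) ^ (m - 1) * ∑ k ∈ Finset.range a, F k + ↑m * ((a : ℚ) ^ (m - 1) * (x / ↑a) ^ (m - 1)) := by
    ring
  rw [this, hpows]
  ring

lemma derivative_eq_zero_of_periodic (p : Polynomial ℚ)
    (h : ∀ x : ℚ, p.eval (x + 1) = p.eval x) : Polynomial.derivative p = 0 := by
  have hconst : p = Polynomial.C (p.eval 0) := by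
    have hcomp : p.comp (Polynomial.X + 1) = p := by
      apply Polynomial.funext
      intro r
      rw [Polynomial.eval_comp]
      simp [h r]
    have hnat : ∀ n : ℕ, p.eval (n : ℚ) = p.eval 0 := by
      intro n
      induction n with
      | zero => simp
      | succ k ih => push_cast; rw [h k, ih]
    have hq : p - Polynomial.C (p.eval 0) = 0 := by
      apply Polynomial.eq_zero_of_infinite_isRoot
      refine Set.infinite_of_injective_forall_mem (f := fun n : ℕ => (n : ℚ))
        (fun x y hxy => Nat.cast_injective hxy) ?_
      intro n
      simp [Polynomial.IsRoot, hnat n]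
    linear_combination (norm := ring_nf) hq
  rw [hconst]
  simp

lemma derivative_bmultP (a m : ℕ) (ha : 0 < a) (hm : 1 ≤ m) :
    Polynomial.derivative (bmultP a (m + 1)) = ((m : ℚ[X]) + 1) * bmultP a m := by
  have ha0 : (a : ℚ) ≠ 0 := by positivity
  have hpow : (a : ℚ) ^ m * (a : ℚ)⁻¹ = (a : ℚ) ^ (m - 1) := by
    rcases Nat.exists_eq_add_of_le hm with ⟨k, rfl⟩
    rw [add_comm 1 k, pow_succ]
    field_simp
    simp
  apply Polynomial.funext
  intro r
  unfold bmultP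
  simp only [Polynomial.derivative_sub, Polynomial.derivative_C_mul, Polynomial.derivative_sum,
    Polynomial.derivative_comp, Polynomial.derivative_bernoulli_add_one, Polynomial.derivative_mul,
    Polynomial.derivative_X, Polynomial.derivative_C, Polynomial.derivative_add, add_zero,
    zero_mul, one_mul, zero_add, Nat.add_sub_cancel]
  simp only [Polynomial.eval_sub, Polynomial.eval_mul, Polynomial.eval_add, Polynomial.eval_C,
    Polynomial.eval_X, Polynomial.eval_finset_sum, Polynomial.eval_comp, Polynomial.eval_natCast,
    Polynomial.eval_one]
  simp only [Polynomial.eval_zero, mul_zero, add_zero, ← mul_assoc]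
  rw [← Finset.mul_sum]
  set S := ∑ k ∈ Finset.range a, (Polynomial.bernoulli m).eval ((r + (k : ℚ)) * (a : ℚ)⁻¹) with hS
  linear_combination ((m : ℚ) + 1) * S * hpow

lemma bmultP_eq_zero (a m : ℕ) (ha : 0 < a) (hm : 1 ≤ m) : bmultP a m = 0 := by
  have hd : Polynomial.derivative (bmultP a (m + 1)) = 0 :=
    derivative_eq_zero_of_periodic _ (bmultP_eval_add_one a (m + 1) ha (by omega))
  rw [derivative_bmultP a m ha hm] at hd
  rcases mul_eq_zero.mp hd with h | h
  · exfalso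
    have : ((m : ℚ[X]) + 1).eval 0 = 0 := by rw [h]; simp
    simp at this
    have : (m : ℚ) + 1 ≠ 0 := by positivity
    simp_all
  · exact h

/-- Bernoulli multiplication theorem (Raabe). -/
lemma bernoulli_multiplication (a m : ℕ) (ha : 0 < a) (hm : 1 ≤ m) (x : ℚ) :
    (a : ℚ) ^ (m - 1) * ∑ k ∈ Finset.range a, (Polynomial.bernoulli m).eval ((x + k) / a)
      = (Polynomial.bernoulli m).eval x := by
  have := bmultP_eq_zero a m ha hm
  have h0 := bmultP_eval a m x
  rw [this] at h0
  simp at h0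
  linarith [h0]

/-- ceiling division -/
def cdiv (s q : ℕ) : ℕ := (q + s - 1) / s

lemma le_s_mul_cdiv (s q : ℕ) (hs : 0 < s) : q ≤ s * cdiv s q := by
  have h := Nat.div_add_mod (q + s - 1) s
  have h2 := Nat.mod_lt (q + s - 1) hs
  unfold cdiv
  omega

lemma s_mul_cdiv_lt (s q : ℕ) (hs : 0 < s) : s * cdiv s q < q + s := by
  have h := Nat.div_add_mod (q + s - 1) s
  unfold cdiv
  omega

lemma cdiv_le (s q u : ℕ) (hs : 0 < s) (h : q ≤ s * u) : cdiv s q ≤ u := by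
  unfold cdiv
  have h1 : q + s - 1 ≤ s * u + (s - 1) := by omega
  calc (q + s - 1) / s ≤ (s * u + (s - 1)) / s := Nat.div_le_div_right h1
    _ = u + (s - 1) / s := Nat.mul_add_div hs u (s - 1)
    _ = u := by rw [Nat.div_eq_of_lt (by omega)]; omega

lemma cdiv_zero (s : ℕ) (hs : 0 < s) : cdiv s 0 = 0 := by
  unfold cdiv
  rw [Nat.div_eq_of_lt (by omega)]

lemma ceil_cast (s q : ℕ) (hs : 0 < s) :
    (⌈(q : ℚ) / (s : ℚ)⌉ : ℚ) = (cdiv s q : ℚ) := by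
  have hsQ : (0 : ℚ) < s := by exact_mod_cast hs
  have h1 : ⌈(q : ℚ) / (s : ℚ)⌉ = ((cdiv s q : ℕ) : ℤ) := by
    rw [Int.ceil_eq_iff]
    constructor
    · rw [lt_div_iff₀ hsQ]
      have := s_mul_cdiv_lt s q hs
      have hcast : (s : ℚ) * (cdiv s q : ℚ) < (q : ℚ) + s := by exact_mod_cast this
      push_cast
      nlinarith
    · rw [div_le_iff₀ hsQ]
      have := le_s_mul_cdiv s q hs
      have hcast : (q : ℚ) ≤ (s : ℚ) * (cdiv s q : ℚ) := by exact_mod_cast this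
      push_cast
      nlinarith
  rw [h1]
  push_cast
  ring

lemma exists_rep (s q : ℕ) (hs : 0 < s) :
    ∃ x : Fin s → ℕ, (∑ i, x i = cdiv s q) ∧ (∑ i : Fin s, ((i : ℕ) + 1) * x i = q) := by
  set k := q / s with hk
  set rr := q % s with hrr
  have hqd : s * k + rr = q := Nat.div_add_mod q s
  have hrs : rr < s := Nat.mod_lt q hs
  by_cases h0 : rr = 0
  · refine ⟨fun i => if i = ⟨s - 1, by omega⟩ then k else 0, ?_, ?_⟩
    · rw [Finset.sum_ite_eq' Finset.univ]
      have hcd : cdiv s q = k := by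
        unfold cdiv
        have : q + s - 1 = s * k + (s - 1) := by omega
        rw [this, Nat.mul_add_div hs, Nat.div_eq_of_lt (by omega)]
        omega
      simp [hcd]
    · have : ∀ i : Fin s, ((i : ℕ) + 1) * (if i = (⟨s - 1, by omega⟩ : Fin s) then k else 0)
          = if i = (⟨s - 1, by omega⟩ : Fin s) then ((i : ℕ) + 1) * k else 0 := by
        intro i; split <;> simp
      rw [Finset.sum_congr rfl fun i _ => this i, Finset.sum_ite_eq' Finset.univ]
      simp only [Finset.mem_univ, if_true]
      have hs1 : s - 1 + 1 = s := by omega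
      show (s - 1 + 1) * k = q
      rw [hs1]
      omega
  · have hb2 : rr - 1 < s := by omega
    refine ⟨fun i => (if i = ⟨s - 1, by omega⟩ then k else 0) + (if i = ⟨rr - 1, hb2⟩ then 1 else 0),
      ?_, ?_⟩
    · rw [Finset.sum_add_distrib, Finset.sum_ite_eq' Finset.univ, Finset.sum_ite_eq' Finset.univ]
      have hcd : cdiv s q = k + 1 := by
        unfold cdiv
        have : q + s - 1 = s * k + (rr + s - 1) := by omega
        have h9 : (rr + s - 1) / s = 1 :=
          Nat.div_eq_of_lt_le (by omega) (by omega)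
        rw [this, Nat.mul_add_div hs, h9]
      simp [hcd]
    · have : ∀ i : Fin s, ((i : ℕ) + 1) *
          ((if i = (⟨s - 1, by omega⟩ : Fin s) then k else 0) + (if i = (⟨rr - 1, hb2⟩ : Fin s) then 1 else 0))
          = (if i = (⟨s - 1, by omega⟩ : Fin s) then ((i : ℕ) + 1) * k else 0)
            + (if i = (⟨rr - 1, hb2⟩ : Fin s) then ((i : ℕ) + 1) * 1 else 0) := by
        intro i
        rw [mul_add]
        congr 1 <;> (split <;> simp)
      rw [Finset.sum_congr rfl fun i _ => this i, Finset.sum_add_distrib,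
        Finset.sum_ite_eq' Finset.univ, Finset.sum_ite_eq' Finset.univ]
      simp only [Finset.mem_univ, if_true]
      have hs1 : s - 1 + 1 = s := by omega
      have hr1 : rr - 1 + 1 = rr := by omega
      show (s - 1 + 1) * k + (rr - 1 + 1) * 1 = q
      rw [hs1, hr1]
      omega

end SylvesterAux

/-- Equation (6.1.x.7): for the generalized arithmetic progression
`a, ha+d, ha+2d, …, ha+sd` with `gcd(a,d) = 1`, `a ≥ 2`, `d, h ≥ 1`,
`1 ≤ s < a`, and `m ≥ 1`,
`m·S_{m−1} = a^{m−1}·∑_{n=0}^{a−1} B_m(h⌈n/s⌉ + nd/a) − B_m`. -/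
theorem sylvester_sum_generalized_arithmetic_progression
    (a d h s : ℕ) (ha : 2 ≤ a) (hd : 1 ≤ d) (hh : 1 ≤ h) (hs : 1 ≤ s)
    (hsa : s < a) (had : Nat.Coprime a d)
    (NR : Finset ℕ)
    (hNR : ∀ n : ℕ, n ∈ NR ↔ 0 < n ∧
      ¬ ∃ (x₀ : ℕ) (x : Fin s → ℕ),
        n = a * x₀ + ∑ i : Fin s, (h * a + ((i : ℕ) + 1) * d) * x i)
    (m : ℕ) (hm : 1 ≤ m) :
    (m : ℚ) * ∑ n ∈ NR, (n : ℚ) ^ (m - 1) =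
      (a : ℚ) ^ (m - 1) *
        ∑ n ∈ Finset.range a,
          (Polynomial.bernoulli m).eval
            ((h : ℚ) * (⌈(n : ℚ) / (s : ℚ)⌉ : ℚ) + (n : ℚ) * (d : ℚ) / (a : ℚ))
      - bernoulli m := by
  have ha0 : 0 < a := by omega
  have haQ : (a : ℚ) ≠ 0 := by positivity
  set r : ℕ → ℕ := fun q => q * d % a with hrdef
  set Q : ℕ → ℕ := fun q => h * cdiv s q + q * d / a with hQdef
  have hra : ∀ q, r q < a := fun q => Nat.mod_lt _ ha0
  have hwq : ∀ q, a * Q q + r q = h * a * cdiv s q + q * d := by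
    intro q
    have h1 : a * (q * d / a) + q * d % a = q * d := Nat.div_add_mod (q * d) a
    simp only [hrdef, hQdef, Nat.mul_add]
    have h2 : a * (h * cdiv s q) = h * a * cdiv s q := by ring
    linarith [h1, h2]
  have hexpand : ∀ x : Fin s → ℕ, ∑ i : Fin s, (h * a + ((i : ℕ) + 1) * d) * x i
      = h * a * (∑ i, x i) + d * ∑ i : Fin s, ((i : ℕ) + 1) * x i := by
    intro x
    rw [Finset.mul_sum, Finset.mul_sum, ← Finset.sum_add_distrib]
    refine Finset.sum_congr rfl fun i _ => by ring
  have hrinj : ∀ q1 q2 : ℕ, q1 < a → q2 < a → r q1 = r q2 → q1 = q2 := by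
    intro q1 q2 h1 h2 hreq
    have hmodeq : q1 * d ≡ q2 * d [MOD a] := hreq
    have h3 : q1 % a = q2 % a :=
      Nat.ModEq.cancel_right_of_coprime had hmodeq
    rwa [Nat.mod_eq_of_lt h1, Nat.mod_eq_of_lt h2] at h3
  obtain ⟨e, he⟩ : ∃ e, d * e % a = 1 :=
    by obtain ⟨e, -, he⟩ := Nat.exists_mul_mod_eq_one_of_coprime had.symm (by omega); exact ⟨e, he⟩
  have hde : d * e ≡ 1 [MOD a] := by
    calc d * e ≡ d * e % a [MOD a] := (Nat.mod_modEq (d * e) a).symm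
      _ = 1 := he
  -- the set of non-representable numbers, explicitly
  have hT : NR = (Finset.range a).biUnion
      (fun q => (Finset.range (Q q)).image (fun j => r q + a * j)) := by
    ext n
    rw [hNR]
    simp only [Finset.mem_biUnion, Finset.mem_image, Finset.mem_range]
    constructor
    · rintro ⟨hn0, hnonrep⟩
      set q := n * e % a with hq
      have hres : r q = n % a := by
        have h1 : q * d ≡ n * e * d [MOD a] := Nat.ModEq.mul_right d (Nat.mod_modEq (n * e) a)
        have h2 : n * (d * e) ≡ n * 1 [MOD a] := Nat.ModEq.mul_left n hde
        have h3 : q * d ≡ n [MOD a] := by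
          calc q * d ≡ n * e * d [MOD a] := h1
            _ = n * (d * e) := by ring
            _ ≡ n * 1 [MOD a] := h2
            _ = n := by ring
        exact h3
      refine ⟨q, Nat.mod_lt _ ha0, n / a, ?_, ?_⟩
      · by_contra hlt
        push_neg at hlt
        apply hnonrep
        obtain ⟨x, hx1, hx2⟩ := exists_rep s q hs
        refine ⟨n / a - Q q, x, ?_⟩
        rw [hexpand, hx1, hx2]
        have e1 : a * (n / a) + n % a = n := Nat.div_add_mod n a
        have e3 := hwq q
        have e4 : a * (n / a - Q q) + a * Q q = a * (n / a) := by
          rw [← Nat.mul_add]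
          congr 1
          omega
        have e5 : d * q = q * d := mul_comm d q
        linarith [e1, e3, e4, e5, hres]
      · have e1 : a * (n / a) + n % a = n := Nat.div_add_mod n a
        linarith [e1, hres]
    · rintro ⟨q, hqa, j, hj, hn⟩
      have hnmod : n % a = r q := by
        rw [← hn, Nat.add_mul_mod_self_left, Nat.mod_eq_of_lt (hra q)]
      constructor
      · -- 0 < n
        rcases Nat.eq_zero_or_pos n with h0 | h0
        · exfalso
          have h00 : r q + a * j = 0 := hn.trans h0
          have hrq0 : r q = 0 := Nat.eq_zero_of_add_eq_zero_right h00
          have hj0 : a * j = 0 := by rwa [hrq0, zero_add] at h00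
          have hdvd : a ∣ q * d := Nat.dvd_of_mod_eq_zero hrq0
          have hq0 : q = 0 := by
            have hdq := Nat.Coprime.dvd_of_dvd_mul_right had hdvd
            rcases Nat.eq_zero_or_pos q with hz | hz
            · exact hz
            · exact absurd hqa (by have := Nat.le_of_dvd hz hdq; omega)
          rw [hq0] at hj
          have hQ0 : Q 0 = 0 := by
            simp [hQdef, cdiv_zero s hs, Nat.zero_div]
          rw [hQ0] at hj
          exact Nat.not_lt_zero j hj
        · exact h0
      · rintro ⟨x₀, x, hxeq⟩
        rw [hexpand] at hxeq
        set u := ∑ i, x i with hu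
        set t := ∑ i : Fin s, ((i : ℕ) + 1) * x i with ht
        have htsu : t ≤ s * u := by
          rw [ht, hu, Finset.mul_sum]
          refine Finset.sum_le_sum fun i _ => ?_
          have : (i : ℕ) + 1 ≤ s := i.2
          exact Nat.mul_le_mul_right _ this
        -- n ≡ d t (mod a)
        have hmod2 : n % a = d * t % a := by
          have : n = d * t + a * (x₀ + h * u) := by rw [hxeq]; ring
          rw [this, Nat.add_mul_mod_self_left]
        have hdt : d * t ≡ d * q [MOD a] := by
          have h1 : d * t % a = r q := by rw [← hmod2, hnmod]
          have h2 : d * q % a = r q := by rw [hrdef]; simp [mul_comm]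
          show d * t % a = d * q % a
          rw [h1, h2]
        have htq : t ≡ q [MOD a] :=
          Nat.ModEq.cancel_left_of_coprime had hdt
        have hqt : q ≤ t := by
          have h1 : t % a = q % a := htq
          rw [Nat.mod_eq_of_lt hqa] at h1
          have := Nat.mod_le t a
          omega
        have hcu : cdiv s q ≤ u := cdiv_le s q u hs (le_trans hqt htsu)
        -- size contradiction
        have e3 := hwq q
        have i1 : h * a * cdiv s q ≤ h * a * u := Nat.mul_le_mul_left _ hcu
        have i2 : d * q ≤ d * t := Nat.mul_le_mul_left _ hqt
        have i3 : a * (j + 1) ≤ a * Q q := Nat.mul_le_mul_left _ hj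
        have i4 : a * (j + 1) = a * j + a := by ring
        have e5 : d * q = q * d := mul_comm d q
        have i0 : 0 ≤ a * x₀ := Nat.zero_le _
        have ha1 : 1 ≤ a := ha0
        linarith [hxeq, i0, i1, i2, i3, i4, e3, e5, hn, ha1]
  -- disjointness of the classes
  have hdisj : (↑(Finset.range a) : Set ℕ).PairwiseDisjoint
      (fun q => (Finset.range (Q q)).image (fun j => r q + a * j)) := by
    intro q1 h1 q2 h2 hne
    simp only [Finset.coe_range, Set.mem_Iio] at h1 h2
    rw [Function.onFun, Finset.disjoint_left]
    rintro n hn1 hn2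
    simp only [Finset.mem_image, Finset.mem_range] at hn1 hn2
    obtain ⟨j1, _, hj1⟩ := hn1
    obtain ⟨j2, _, hj2⟩ := hn2
    apply hne
    apply hrinj q1 q2 h1 h2
    have hA : n % a = r q1 := by rw [← hj1, Nat.add_mul_mod_self_left, Nat.mod_eq_of_lt (hra q1)]
    have hB : n % a = r q2 := by rw [← hj2, Nat.add_mul_mod_self_left, Nat.mod_eq_of_lt (hra q2)]
    exact hA.symm.trans hB
  -- rewrite the sum over NR
  have hSum1 : ∑ n ∈ NR, (n : ℚ) ^ (m - 1)
      = ∑ q ∈ Finset.range a, ∑ j ∈ Finset.range (Q q), ((r q : ℚ) + a * j) ^ (m - 1) := by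
    rw [hT, Finset.sum_biUnion hdisj]
    refine Finset.sum_congr rfl fun q hq => ?_
    rw [Finset.sum_image (fun j1 _ j2 _ hj =>
      Nat.eq_of_mul_eq_mul_left ha0 (Nat.add_left_cancel hj))]
    refine Finset.sum_congr rfl fun j hj => by push_cast; ring
  -- telescoping within each class
  have htel : ∀ q : ℕ, (m : ℚ) * ∑ j ∈ Finset.range (Q q), ((r q : ℚ) + a * j) ^ (m - 1)
      = (a : ℚ) ^ (m - 1) * ((Polynomial.bernoulli m).eval (((r q : ℚ) + a * Q q) / a)
          - (Polynomial.bernoulli m).eval ((r q : ℚ) / a)) := by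
    intro q
    set g : ℕ → ℚ := fun j => (Polynomial.bernoulli m).eval (((r q : ℚ) + a * j) / a) with hg
    have hstep : ∀ j : ℕ,
        (m : ℚ) * ((r q : ℚ) + a * j) ^ (m - 1) = (a : ℚ) ^ (m - 1) * (g (j + 1) - g j) := by
      intro j
      have h1 : ((r q : ℚ) + a * ((j : ℕ) + 1 : ℕ)) / a = 1 + ((r q : ℚ) + a * j) / a := by
        push_cast
        field_simp
        ring
      have h2 : g (j + 1) - g j = m * (((r q : ℚ) + a * j) / a) ^ (m - 1) := by
        simp only [hg]
        rw [h1, Polynomial.bernoulli_eval_one_add]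
        ring
      rw [h2, div_pow]
      have hane : (a : ℚ) ^ (m - 1) ≠ 0 := by positivity
      field_simp
    rw [Finset.mul_sum, Finset.sum_congr rfl fun j _ => hstep j, ← Finset.mul_sum,
      Finset.sum_range_sub g]
    simp only [hg, Nat.cast_zero, mul_zero, add_zero]
  -- value at the top of each class
  have hval : ∀ q : ℕ, ((r q : ℚ) + a * Q q) / a
      = (h : ℚ) * (cdiv s q : ℚ) + (q : ℚ) * (d : ℚ) / (a : ℚ) := by
    intro q
    have hnat : a * Q q + r q = h * a * cdiv s q + q * d := hwq q
    have hcast : (a : ℚ) * Q q + r q = h * a * cdiv s q + q * d := by exact_mod_cast hnat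
    field_simp
    linarith [hcast]
  -- permutation of residues
  have hperm : ∑ q ∈ Finset.range a, (Polynomial.bernoulli m).eval ((r q : ℚ) / a)
      = ∑ k ∈ Finset.range a, (Polynomial.bernoulli m).eval (((0 : ℚ) + k) / a) := by
    refine Finset.sum_nbij' (i := fun q => r q) (j := fun k => k * e % a) ?_ ?_ ?_ ?_ ?_
    · intro q hq
      exact Finset.mem_range.mpr (hra q)
    · intro k hk
      exact Finset.mem_range.mpr (Nat.mod_lt _ ha0)
    · intro q hq
      have h1 : r q * e ≡ q [MOD a] := by
        calc r q * e ≡ q * d * e [MOD a] := Nat.ModEq.mul_right e (Nat.mod_modEq (q * d) a)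
          _ = q * (d * e) := by ring
          _ ≡ q * 1 [MOD a] := Nat.ModEq.mul_left q hde
          _ = q := by ring
      have h2 : r q * e % a = q % a := h1
      rw [Nat.mod_eq_of_lt (Finset.mem_range.mp hq)] at h2
      exact h2
    · intro k hk
      have h1 : (k * e % a) * d ≡ k [MOD a] := by
        calc (k * e % a) * d ≡ k * e * d [MOD a] := Nat.ModEq.mul_right d (Nat.mod_modEq (k * e) a)
          _ = k * (d * e) := by ring
          _ ≡ k * 1 [MOD a] := Nat.ModEq.mul_left k hde
          _ = k := by ring
      have h2 : (k * e % a) * d % a = k % a := h1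
      rw [Nat.mod_eq_of_lt (Finset.mem_range.mp hk)] at h2
      exact h2
    · intro q hq
      rw [zero_add]
  have hmult := bernoulli_multiplication a m ha0 hm 0
  rw [Polynomial.bernoulli_eval_zero] at hmult
  -- assemble
  rw [hSum1, Finset.mul_sum]
  rw [Finset.sum_congr rfl fun q _ => htel q]
  have hsplit : ∑ q ∈ Finset.range a, (a : ℚ) ^ (m - 1) *
      ((Polynomial.bernoulli m).eval (((r q : ℚ) + a * Q q) / a)
        - (Polynomial.bernoulli m).eval ((r q : ℚ) / a))
      = (a : ℚ) ^ (m - 1) * ∑ q ∈ Finset.range a,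
          (Polynomial.bernoulli m).eval (((r q : ℚ) + a * Q q) / a)
        - (a : ℚ) ^ (m - 1) * ∑ q ∈ Finset.range a,
          (Polynomial.bernoulli m).eval ((r q : ℚ) / a) := by
    rw [← mul_sub, ← Finset.sum_sub_distrib, Finset.mul_sum]
  rw [hsplit, hperm, hmult]
  congr 1
  congr 1
  refine Finset.sum_congr rfl fun q hq => ?_
  rw [hval q, ceil_cast s q hs]
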